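/- For every matrix (a b; c d) in SL₂(ℤ) with c ≡ 0 (mod 4) and every τ in the upper half-plane: θ₃((aτ+b)/(cτ+d))² = χ₋₄(d)·(cτ+d)·θ₃(τ)². -/

import Mathlib

open Complex

noncomputable section

/-- The Jacobi theta-null θ₃. -/
def theta3 (τ : ℂ) : ℂ :=
  ∑' m : ℤ, Complex.exp (2 * Real.pi * Complex.I * τ * (m : ℂ) ^ 2)

/-- The quadratic character χ₋₄. -/
def chiNeg4 (d : ℤ) : ℂ := if d % 4 = 1 then 1 else if d % 4 = 3 then -1 else 0


-- denominator nonzero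
lemma mobius_denom_ne (A B C D : ℤ) (h : A*D - B*C = 1) (σ : ℂ) (hσ : 0 < σ.im) :
    ((C:ℂ))*σ + D ≠ 0 := by
  rcases eq_or_ne C 0 with h0 | h0
  · subst h0
    have hD : D ≠ 0 := by rintro rfl; omega
    simp only [Int.cast_zero, zero_mul, zero_add]
    exact_mod_cast hD
  · intro hz
    have him : (((C:ℂ))*σ + D).im = (C:ℝ) * σ.im := by
      simp [add_im, mul_im]
    rw [hz] at him
    simp only [zero_im] at him
    have : (C:ℝ) ≠ 0 := Int.cast_ne_zero.mpr h0
    have := mul_ne_zero this (ne_of_gt hσ)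
    exact this him.symm

lemma mobius_im_pos (A B C D : ℤ) (h : A*D - B*C = 1) (σ : ℂ) (hσ : 0 < σ.im) :
    0 < ((((A:ℂ))*σ + B) / (((C:ℂ))*σ + D)).im := by
  have hz : ((C:ℂ))*σ + D ≠ 0 := mobius_denom_ne A B C D h σ hσ
  have hns : 0 < normSq ((C:ℂ)*σ + D) := normSq_pos.mpr hz
  rw [div_im]
  have key : (((A:ℂ))*σ + B).im * (((C:ℂ))*σ + D).re - (((A:ℂ))*σ + B).re * (((C:ℂ))*σ + D).im
      = σ.im := by
    have hc : ((A:ℝ)*(D:ℝ) - (B:ℝ)*(C:ℝ)) = 1 := by exact_mod_cast congrArg (Int.cast : ℤ → ℝ) h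
    simp only [add_im, add_re, mul_im, mul_re, intCast_re, intCast_im]
    nlinarith [hc]
  rw [div_sub_div_same, key]
  exact div_pos hσ hns


lemma jt_add_even (n : ℤ) (σ : ℂ) : jacobiTheta (2*(n:ℂ) + σ) = jacobiTheta σ := by
  induction n using Int.induction_on with
  | zero => simp
  | succ k ih =>
      have e : 2*((k+1 : ℤ):ℂ) + σ = 2 + (2*((k:ℤ):ℂ) + σ) := by push_cast; ring
      rw [e, jacobiTheta_two_add, ih]
  | pred k ih =>
      have e : 2*((-k : ℤ):ℂ) + σ = 2 + (2*((-k-1 : ℤ):ℂ) + σ) := by push_cast; ring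
      rw [e, jacobiTheta_two_add] at ih
      exact ih

lemma jt_sq_S (σ : ℂ) (hσ : 0 < σ.im) :
    jacobiTheta (-1/σ) ^ 2 = -I * σ * jacobiTheta σ ^ 2 := by
  set τ : UpperHalfPlane := ⟨σ, hσ⟩ with hτ
  have h0 : σ ≠ 0 := fun h => by simp [h] at hσ
  have hne : -I * σ ≠ 0 := mul_ne_zero (neg_ne_zero.mpr I_ne_zero) h0
  have hS : jacobiTheta ↑(ModularGroup.S • τ) = (-I * σ) ^ (1/2 : ℂ) * jacobiTheta σ :=
    jacobiTheta_S_smul τ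
  have hcoe : ((ModularGroup.S • τ : UpperHalfPlane) : ℂ) = -1/σ := by
    rw [UpperHalfPlane.modular_S_smul, UpperHalfPlane.coe_mk]
    show (-σ)⁻¹ = -1/σ
    rw [inv_neg, neg_div, one_div]
  rw [hcoe] at hS
  have hsq : ((-I*σ) ^ (1/2:ℂ)) ^ 2 = -I * σ := by
    rw [sq, ← cpow_add _ _ hne]
    norm_num
  rw [hS, mul_pow, hsq]

lemma jt_sq_V1 (σ : ℂ) (hσ : 0 < σ.im) :
    jacobiTheta (σ/(2*σ+1)) ^ 2 = (2*σ+1) * jacobiTheta σ ^ 2 := by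
  have h0 : σ ≠ 0 := fun h => by simp [h] at hσ
  have hu : 0 < (-1/σ).im := by
    have := mobius_im_pos 0 (-1) 1 0 (by ring) σ hσ
    simpa using this
  have hu2 : 0 < (-1/σ - 2).im := by
    have : (-1/σ - 2).im = (-1/σ).im := by simp [sub_im]
    rw [this]; exact hu
  have hden : 2*σ+1 ≠ 0 := by
    have := mobius_denom_ne 1 0 2 1 (by ring) σ hσ
    push_cast at this
    convert this using 2 <;> ring
  have hden' : -1 - 2*σ ≠ 0 := fun h => hden (by linear_combination -h)
  have harg : -1/(-1/σ - 2) = σ/(2*σ+1) := by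
    have e : -1/σ - 2 = (-1 - 2*σ)/σ := by field_simp
    rw [e, div_div_eq_mul_div, div_eq_div_iff hden' hden]
    ring
  have h1 := jt_sq_S (-1/σ - 2) hu2
  rw [harg] at h1
  have h2 : jacobiTheta (-1/σ - 2) = jacobiTheta (-1/σ) := by
    have := jt_add_even (-1) (-1/σ)
    rw [show 2*((-1:ℤ):ℂ) + (-1/σ) = -1/σ - 2 by push_cast; ring] at this
    exact this
  have h3 := jt_sq_S σ hσ
  rw [h2, h3] at h1
  rw [h1]
  have : -I * (-1/σ - 2) * (-I * σ * jacobiTheta σ ^ 2)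
      = (-I * -I) * (-1/σ - 2) * σ * jacobiTheta σ ^ 2 := by ring
  rw [this, show -I * -I = (-1 : ℂ) by rw [neg_mul_neg, I_mul_I]]
  have hco : (-1:ℂ) * (-1/σ - 2) * σ = 2*σ+1 := by field_simp; try ring
  linear_combination (jacobiTheta σ ^ 2) * hco

lemma jt_sq_Vneg1 (σ : ℂ) (hσ : 0 < σ.im) :
    jacobiTheta (σ/(-2*σ+1)) ^ 2 = (-2*σ+1) * jacobiTheta σ ^ 2 := by
  have h0 : σ ≠ 0 := fun h => by simp [h] at hσ
  have hu : 0 < (-1/σ).im := by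
    have := mobius_im_pos 0 (-1) 1 0 (by ring) σ hσ
    simpa using this
  have hu2 : 0 < (-1/σ + 2).im := by
    have : (-1/σ + 2).im = (-1/σ).im := by simp [add_im]
    rw [this]; exact hu
  have hden : -2*σ+1 ≠ 0 := by
    have := mobius_denom_ne 1 0 (-2) 1 (by ring) σ hσ
    push_cast at this
    convert this using 2 <;> ring
  have hden' : -1 + 2*σ ≠ 0 := fun h => hden (by linear_combination -h)
  have harg : -1/(-1/σ + 2) = σ/(-2*σ+1) := by
    have e : -1/σ + 2 = (-1 + 2*σ)/σ := by field_simp; try ring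
    rw [e, div_div_eq_mul_div, div_eq_div_iff hden' hden]
    ring
  have h1 := jt_sq_S (-1/σ + 2) hu2
  rw [harg] at h1
  have h2 : jacobiTheta (-1/σ + 2) = jacobiTheta (-1/σ) := by
    rw [show -1/σ + 2 = 2 + -1/σ by ring, jacobiTheta_two_add]
  have h3 := jt_sq_S σ hσ
  rw [h2, h3] at h1
  rw [h1]
  have : -I * (-1/σ + 2) * (-I * σ * jacobiTheta σ ^ 2)
      = (-I * -I) * (-1/σ + 2) * σ * jacobiTheta σ ^ 2 := by ring
  rw [this, show -I * -I = (-1 : ℂ) by rw [neg_mul_neg, I_mul_I]]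
  have hco : (-1:ℂ) * (-1/σ + 2) * σ = -2*σ+1 := by field_simp; try ring
  linear_combination (jacobiTheta σ ^ 2) * hco

lemma jt_sq_V (n : ℤ) (σ : ℂ) (hσ : 0 < σ.im) :
    jacobiTheta (σ/(2*(n:ℂ)*σ+1)) ^ 2 = (2*(n:ℂ)*σ+1) * jacobiTheta σ ^ 2 := by
  induction n using Int.induction_on with
  | zero => simp
  | succ k ih =>
      have hdw : ((2*k:ℤ):ℂ)*σ + ((1:ℤ):ℂ) ≠ 0 := mobius_denom_ne 1 0 (2*k) 1 (by ring) σ hσ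
      have hdw' : 2*((k:ℤ):ℂ)*σ + 1 ≠ 0 := by
        push_cast at hdw; convert hdw using 2 <;> push_cast <;> ring
      have hw : 0 < (σ/(2*((k:ℤ):ℂ)*σ+1)).im := by
        have := mobius_im_pos 1 0 (2*k) 1 (by ring) σ hσ
        have e : (((1:ℤ):ℂ)*σ + ((0:ℤ):ℂ))/(((2*k:ℤ):ℂ)*σ + ((1:ℤ):ℂ))
            = σ/(2*((k:ℤ):ℂ)*σ+1) := by push_cast; ring_nf
        rwa [e] at this
      set w := σ/(2*((k:ℤ):ℂ)*σ+1) with hwdef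
      have hstep := jt_sq_V1 w hw
      have h2w : 2*w+1 = (2*(((k:ℤ):ℂ)+1)*σ+1)/(2*((k:ℤ):ℂ)*σ+1) := by
        rw [hwdef, eq_div_iff hdw',
          show (2*(σ/(2*((k:ℤ):ℂ)*σ+1))+1)*(2*((k:ℤ):ℂ)*σ+1)
            = 2*(σ/(2*((k:ℤ):ℂ)*σ+1)*(2*((k:ℤ):ℂ)*σ+1)) + (2*((k:ℤ):ℂ)*σ+1) from by ring,
          div_mul_cancel₀ _ hdw']
        ring
      have harg : w/(2*w+1) = σ/(2*(((k:ℤ):ℂ)+1)*σ+1) := by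
        rw [h2w, div_div_eq_mul_div, hwdef, div_mul_cancel₀ _ hdw']
      have hco : (2*w+1)*(2*((k:ℤ):ℂ)*σ+1) = 2*(((k:ℤ):ℂ)+1)*σ+1 := by
        rw [hwdef,
          show (2*(σ/(2*((k:ℤ):ℂ)*σ+1))+1)*(2*((k:ℤ):ℂ)*σ+1)
            = 2*(σ/(2*((k:ℤ):ℂ)*σ+1)*(2*((k:ℤ):ℂ)*σ+1)) + (2*((k:ℤ):ℂ)*σ+1) from by ring,
          div_mul_cancel₀ _ hdw']
        ring
      have goal' : jacobiTheta (σ/(2*(((k:ℤ):ℂ)+1)*σ+1)) ^ 2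
          = (2*(((k:ℤ):ℂ)+1)*σ+1) * jacobiTheta σ ^ 2 := by
        rw [← harg, hstep, ih, ← mul_assoc, hco]
      have ecast : ((((k:ℤ)+1 : ℤ)):ℂ) = ((k:ℤ):ℂ)+1 := by push_cast; ring
      rw [ecast]
      exact goal'
  | pred k ih =>
      have hdw : ((-2*k:ℤ):ℂ)*σ + ((1:ℤ):ℂ) ≠ 0 := mobius_denom_ne 1 0 (-2*k) 1 (by ring) σ hσ
      have hdw' : 2*(-((k:ℤ):ℂ))*σ + 1 ≠ 0 := by
        push_cast at hdw; convert hdw using 2 <;> push_cast <;> ring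
      have hw : 0 < (σ/(2*(-((k:ℤ):ℂ))*σ+1)).im := by
        have := mobius_im_pos 1 0 (-2*k) 1 (by ring) σ hσ
        have e : (((1:ℤ):ℂ)*σ + ((0:ℤ):ℂ))/(((-2*k:ℤ):ℂ)*σ + ((1:ℤ):ℂ))
            = σ/(2*(-((k:ℤ):ℂ))*σ+1) := by push_cast; ring_nf
        rwa [e] at this
      set w := σ/(2*(-((k:ℤ):ℂ))*σ+1) with hwdef
      have hstep := jt_sq_Vneg1 w hw
      have h2w : -2*w+1 = (2*(-((k:ℤ):ℂ)-1)*σ+1)/(2*(-((k:ℤ):ℂ))*σ+1) := by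
        rw [hwdef, eq_div_iff hdw',
          show (-2*(σ/(2*(-((k:ℤ):ℂ))*σ+1))+1)*(2*(-((k:ℤ):ℂ))*σ+1)
            = -2*(σ/(2*(-((k:ℤ):ℂ))*σ+1)*(2*(-((k:ℤ):ℂ))*σ+1)) + (2*(-((k:ℤ):ℂ))*σ+1) from by ring,
          div_mul_cancel₀ _ hdw']
        ring
      have harg : w/(-2*w+1) = σ/(2*(-((k:ℤ):ℂ)-1)*σ+1) := by
        rw [h2w, div_div_eq_mul_div, hwdef, div_mul_cancel₀ _ hdw']
      have hco : (-2*w+1)*(2*(-((k:ℤ):ℂ))*σ+1) = 2*(-((k:ℤ):ℂ)-1)*σ+1 := by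
        rw [hwdef,
          show (-2*(σ/(2*(-((k:ℤ):ℂ))*σ+1))+1)*(2*(-((k:ℤ):ℂ))*σ+1)
            = -2*(σ/(2*(-((k:ℤ):ℂ))*σ+1)*(2*(-((k:ℤ):ℂ))*σ+1)) + (2*(-((k:ℤ):ℂ))*σ+1) from by ring,
          div_mul_cancel₀ _ hdw']
        ring
      have ih' : jacobiTheta w ^ 2 = (2*(-((k:ℤ):ℂ))*σ+1) * jacobiTheta σ ^ 2 := by
        have ecast : (((-k : ℤ)):ℂ) = -((k:ℤ):ℂ) := by push_cast; ring
        rw [ecast] at ih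
        exact ih
      have goal' : jacobiTheta (σ/(2*(-((k:ℤ):ℂ)-1)*σ+1)) ^ 2
          = (2*(-((k:ℤ):ℂ)-1)*σ+1) * jacobiTheta σ ^ 2 := by
        rw [← harg, hstep, ih', ← mul_assoc, hco]
      have ecast : (((-k-1 : ℤ)):ℂ) = -((k:ℤ):ℂ)-1 := by push_cast; ring
      rw [ecast]
      exact goal'

def JP (A B C D : ℤ) : Prop := ∀ σ : ℂ, 0 < σ.im →
  jacobiTheta (((A:ℂ)*σ+B)/((C:ℂ)*σ+D))^2 = chiNeg4 D * ((C:ℂ)*σ+D) * jacobiTheta σ^2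

lemma chi_period (D k : ℤ) : chiNeg4 (D + 4*k) = chiNeg4 D := by
  have h : (D + 4*k) % 4 = D % 4 := by omega
  simp only [chiNeg4, h]

lemma trT (A B C D n : ℤ) (hC : 2 ∣ C) (h : JP A B C D) :
    ∀ B' D' : ℤ, B' = B + 2*n*A → D' = D + 2*n*C → JP A B' C D' := by
  rintro B' D' rfl rfl σ hσ
  have hσ' : 0 < (σ + 2*(n:ℂ)).im := by
    have e : (σ + 2*(n:ℂ)).im = σ.im := by simp
    rw [e]; exact hσ
  have h1 := h (σ + 2*(n:ℂ)) hσ'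
  have harg : ((A:ℂ)*(σ + 2*(n:ℂ))+B)/((C:ℂ)*(σ + 2*(n:ℂ))+D)
      = ((A:ℂ)*σ+((B + 2*n*A : ℤ):ℂ))/((C:ℂ)*σ+((D + 2*n*C : ℤ):ℂ)) := by
    congr 1 <;> push_cast <;> ring
  have hθ : jacobiTheta (σ + 2*(n:ℂ)) = jacobiTheta σ := by
    rw [show σ + 2*(n:ℂ) = 2*(n:ℂ) + σ by ring, jt_add_even]
  have hcoef : ((C:ℂ)*(σ + 2*(n:ℂ))+D) = (C:ℂ)*σ+((D + 2*n*C : ℤ):ℂ) := by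
    push_cast; ring
  have hχ : chiNeg4 (D + 2*n*C) = chiNeg4 D := by
    obtain ⟨c', rfl⟩ := hC
    rw [show D + 2*n*(2*c') = D + 4*(n*c') by ring, chi_period]
  rw [harg, hθ, hcoef] at h1
  rw [h1, hχ]

lemma trV (A B C D n : ℤ) (hdet : A*D - B*C = 1) (h : JP A B C D) :
    ∀ A' C' : ℤ, A' = A + 2*n*B → C' = C + 2*n*D → JP A' B C' D := by
  rintro A' C' rfl rfl σ hσ
  have hdv : ((2*n:ℤ):ℂ)*σ + ((1:ℤ):ℂ) ≠ 0 := mobius_denom_ne 1 0 (2*n) 1 (by ring) σ hσ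
  have hdv' : 2*(n:ℂ)*σ + 1 ≠ 0 := by push_cast at hdv; convert hdv using 2 <;> push_cast <;> ring
  have hw : 0 < (σ/(2*(n:ℂ)*σ+1)).im := by
    have := mobius_im_pos 1 0 (2*n) 1 (by ring) σ hσ
    have e : (((1:ℤ):ℂ)*σ + ((0:ℤ):ℂ))/(((2*n:ℤ):ℂ)*σ + ((1:ℤ):ℂ)) = σ/(2*(n:ℂ)*σ+1) := by
      push_cast; ring_nf
    rwa [e] at this
  set w := σ/(2*(n:ℂ)*σ+1) with hwdef
  have h1 := h w hw
  have hd1 : ((C + 2*n*D : ℤ):ℂ)*σ + (D:ℂ) ≠ 0 :=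
    mobius_denom_ne (A + 2*n*B) B (C + 2*n*D) D (by linear_combination hdet) σ hσ
  have hd2 : (C:ℂ)*w + (D:ℂ) ≠ 0 := mobius_denom_ne A B C D hdet w hw
  have hcoef : ((C:ℂ)*w + D) * (2*(n:ℂ)*σ+1) = ((C + 2*n*D : ℤ):ℂ)*σ + D := by
    rw [hwdef,
      show ((C:ℂ)*(σ/(2*(n:ℂ)*σ+1)) + D) * (2*(n:ℂ)*σ+1)
        = (C:ℂ)*(σ/(2*(n:ℂ)*σ+1)*(2*(n:ℂ)*σ+1)) + D*(2*(n:ℂ)*σ+1) from by ring,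
      div_mul_cancel₀ _ hdv']
    push_cast; ring
  have harg : ((A:ℂ)*w+B)/((C:ℂ)*w+D)
      = (((A + 2*n*B : ℤ):ℂ)*σ+B)/(((C + 2*n*D : ℤ):ℂ)*σ+D) := by
    rw [div_eq_div_iff hd2 hd1]
    rw [hwdef]
    have expand : ((A:ℂ)*(σ/(2*(n:ℂ)*σ+1))+B) * (((C + 2*n*D : ℤ):ℂ)*σ+(D:ℂ))
          - (((A + 2*n*B : ℤ):ℂ)*σ+(B:ℂ)) * ((C:ℂ)*(σ/(2*(n:ℂ)*σ+1))+(D:ℂ))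
        = (σ/(2*(n:ℂ)*σ+1)*(2*(n:ℂ)*σ+1) - σ)
          * ((A:ℂ)*(D:ℂ) - (B:ℂ)*(C:ℂ)) := by push_cast; ring
    have hcancel : σ/(2*(n:ℂ)*σ+1)*(2*(n:ℂ)*σ+1) - σ = 0 := by
      rw [div_mul_cancel₀ _ hdv']; ring
    rw [hcancel, zero_mul] at expand
    linear_combination expand
  have hV := jt_sq_V n σ hσ
  rw [harg] at h1
  rw [← hwdef] at hV
  rw [h1, hV, ← hcoef]
  ring

lemma reduce_pos (C D : ℤ) (hD : 0 < D) (hpar : (C + D) % 2 = 1) :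
    ∃ n : ℤ, (C + 2*n*D).natAbs < D.natAbs := by
  have hm : (0:ℤ) < 2*D := by omega
  have h0 : 0 ≤ C % (2*D) := Int.emod_nonneg C (by omega)
  have h1 : C % (2*D) < 2*D := Int.emod_lt_of_pos C hm
  have heq : 2*D * (C / (2*D)) + C % (2*D) = C := Int.mul_ediv_add_emod C (2*D)
  have hpar2 : C % (2*D) % 2 = C % 2 := Int.emod_emod_of_dvd C ⟨D, rfl⟩
  rcases lt_or_ge (C % (2*D)) D with hlt | hge
  · refine ⟨-(C / (2*D)), ?_⟩
    have e : C + 2*(-(C / (2*D)))*D = C % (2*D) := by linear_combination -heq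
    rw [e]; omega
  · refine ⟨-(C / (2*D)) - 1, ?_⟩
    have e : C + 2*(-(C / (2*D)) - 1)*D = C % (2*D) - 2*D := by linear_combination -heq
    rw [e]; omega

lemma reduceE (C D : ℤ) (hD : D ≠ 0) (hpar : (C + D) % 2 = 1) :
    ∃ n : ℤ, (C + 2*n*D).natAbs < D.natAbs := by
  rcases lt_or_gt_of_ne hD with hneg | hpos
  · obtain ⟨n, hn⟩ := reduce_pos C (-D) (by omega) (by omega)
    refine ⟨-n, ?_⟩
    have e : C + 2*(-n)*D = C + 2*n*(-D) := by ring
    rw [e]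
    have : (-D).natAbs = D.natAbs := Int.natAbs_neg D
    omega
  · exact reduce_pos C D hpos hpar

lemma jp_main : ∀ k : ℕ, ∀ C : ℤ, C.natAbs = k → ∀ A B D : ℤ,
    A*D - B*C = 1 → 2 ∣ B → 2 ∣ C → JP A B C D := by
  intro k
  induction k using Nat.strong_induction_on with
  | _ k ih =>
    intro C hk A B D hdet hB hC
    rcases eq_or_ne C 0 with rfl | h0
    · -- base case C = 0
      have hAD : A*D = 1 := by rw [mul_zero] at hdet; omega
      obtain ⟨b', rfl⟩ := hB
      rcases Int.mul_eq_one_iff_eq_one_or_neg_one.mp hAD with ⟨rfl, rfl⟩ | ⟨rfl, rfl⟩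
      · intro σ hσ
        have hden : ((0:ℤ):ℂ)*σ + ((1:ℤ):ℂ) = 1 := by push_cast; ring
        have hnum : ((1:ℤ):ℂ)*σ + ((2*b':ℤ):ℂ) = 2*(b':ℂ) + σ := by push_cast; ring
        rw [hden, hnum, div_one, jt_add_even]
        have hχ : chiNeg4 1 = 1 := by simp [chiNeg4]
        rw [hχ]; ring
      · intro σ hσ
        have hden : ((0:ℤ):ℂ)*σ + ((-1:ℤ):ℂ) = -1 := by push_cast; ring
        have hnum : ((-1:ℤ):ℂ)*σ + ((2*b':ℤ):ℂ) = -(2*(-b':ℂ) + σ) := by push_cast; ring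
        have hdiv : (-(2*((-b':ℤ):ℂ) + σ))/(-1 : ℂ) = 2*((-b':ℤ):ℂ) + σ := by
          rw [div_neg, div_one, neg_neg]
        rw [hden, hnum]
        push_cast
        rw [show -(2 * -(b':ℂ) + σ) / (-1:ℂ) = 2 * -(b':ℂ) + σ by rw [div_neg, div_one, neg_neg]]
        rw [show (2 : ℂ) * -(b':ℂ) + σ = 2*((-b' : ℤ):ℂ) + σ by push_cast; ring, jt_add_even]
        have hχ : chiNeg4 (-1) = -1 := by simp [chiNeg4]
        rw [hχ]; ring
    · -- inductive step
      have hDodd : D % 2 = 1 := by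
        rcases Int.even_or_odd D with ⟨d', hd'⟩ | hDo
        · exfalso
          obtain ⟨b', rfl⟩ := hB
          obtain ⟨c', rfl⟩ := hC
          have h2 : A*D = A*d' + A*d' := by rw [hd']; ring
          have h4 : (2*b')*(2*c') = 2*(b'*(2*c')) := by ring
          rw [h2, h4] at hdet
          omega
        · obtain ⟨t, ht⟩ := hDo
          omega
      obtain ⟨c0, hc0⟩ := id hC
      obtain ⟨n, hn⟩ := reduceE D C h0 (by omega)
      have hD1odd : (D + 2*n*C) % 2 = 1 := by
        have : 2*n*C = 2*(n*C) := by ring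
        omega
      have hD1ne : D + 2*n*C ≠ 0 := by omega
      obtain ⟨m, hm⟩ := reduceE C (D + 2*n*C) hD1ne (by omega)
      have hlt : (C + 2*m*(D + 2*n*C)).natAbs < k := by omega
      have hdet2 : (A + 2*m*(B + 2*n*A))*(D + 2*n*C)
          - (B + 2*n*A)*(C + 2*m*(D + 2*n*C)) = 1 := by linear_combination hdet
      have hB1 : 2 ∣ (B + 2*n*A) := by
        obtain ⟨b', rfl⟩ := hB; exact ⟨b' + n*A, by ring⟩
      have hC2 : 2 ∣ (C + 2*m*(D + 2*n*C)) := ⟨c0 + m*(D + 2*n*C), by rw [hc0]; ring⟩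
      have hP2 : JP (A + 2*m*(B + 2*n*A)) (B + 2*n*A) (C + 2*m*(D + 2*n*C)) (D + 2*n*C) :=
        ih _ hlt _ rfl _ _ _ hdet2 hB1 hC2
      have hP1 : JP A (B + 2*n*A) C (D + 2*n*C) :=
        trV _ _ _ _ (-m) hdet2 hP2 A C (by ring) (by ring)
      exact trT A (B + 2*n*A) C (D + 2*n*C) (-n) hC hP1 B D (by ring) (by ring)


lemma theta3_eq_jt (z : ℂ) : theta3 z = jacobiTheta (2*z) :=
  tsum_congr fun m => by
    show Complex.exp (2 * Real.pi * Complex.I * z * (m:ℂ)^2)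
        = Complex.exp ((Real.pi : ℂ) * I * (m:ℂ)^2 * (2*z))
    congr 1
    ring

theorem theta3_sq_modularity_on_Gamma0_4
    (a b c d : ℤ) (hdet : a * d - b * c = 1) (hc : (4 : ℤ) ∣ c)
    (τ : ℂ) (hτ : 0 < τ.im) :
    theta3 (((a : ℂ) * τ + b) / ((c : ℂ) * τ + d)) ^ 2 =
      chiNeg4 d * ((c : ℂ) * τ + d) * theta3 τ ^ 2 := by
  obtain ⟨c0, hc0⟩ := hc
  have hdet' : a*d - (2*b)*(2*c0) = 1 := by rw [hc0] at hdet; linear_combination hdet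
  have hσ : 0 < ((2:ℂ)*τ).im := by
    have : ((2:ℂ)*τ).im = 2*τ.im := by simp
    rw [this]; linarith
  have hP := jp_main (2*c0).natAbs (2*c0) rfl a (2*b) d hdet' ⟨b, rfl⟩ ⟨c0, rfl⟩ ((2:ℂ)*τ) hσ
  have edenom : ((2*c0:ℤ):ℂ)*((2:ℂ)*τ) + ((d:ℤ):ℂ) = (c:ℂ)*τ + d := by
    rw [hc0]; push_cast; ring
  have hden : (c:ℂ)*τ + d ≠ 0 := mobius_denom_ne a b c d hdet τ hτ
  have harg : 2*(((a:ℂ)*τ+b)/((c:ℂ)*τ+d))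
      = ((a:ℂ)*((2:ℂ)*τ)+((2*b:ℤ):ℂ))/(((2*c0:ℤ):ℂ)*((2:ℂ)*τ)+((d:ℤ):ℂ)) := by
    rw [edenom, ← mul_div_assoc]
    congr 1
    push_cast; ring
  rw [theta3_eq_jt, theta3_eq_jt, harg, hP, edenom]
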